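/- (Elementary symmetric function in Macdonald basis) For n ≥ 1, e_n(X) = ∑_{μ ⊢ n} (1-q)(1-t) H̃_μ(X;q,t) Π'_μ(q,t) B_μ(q,t) / w_μ(q,t). -/
import Mathlib


open Finset MvPolynomial

/-- The field ℚ(q,t). -/
noncomputable abbrev K2 : Type := FractionRing (MvPolynomial (Fin 2) ℚ)

noncomputable def qV : K2 := algebraMap (MvPolynomial (Fin 2) ℚ) K2 (MvPolynomial.X 0)
noncomputable def tV : K2 := algebraMap (MvPolynomial (Fin 2) ℚ) K2 (MvPolynomial.X 1)

/-- The ring of symmetric functions over K2: `X k` represents the power sum p_k (k ≥ 1). -/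
abbrev SymF2 : Type := MvPolynomial ℕ K2

/-- Symmetric functions in two independent alphabets X, Y:
`X (k,false)` is p_k(X) and `X (k,true)` is p_k(Y). -/
abbrev SymT : Type := MvPolynomial (ℕ × Bool) K2

/-- p_ρ. -/
noncomputable def pProd (s : Multiset ℕ) : SymF2 := (s.map MvPolynomial.X).prod

/-- z_ρ. -/
noncomputable def zCoef (s : Multiset ℕ) : K2 :=
  (s.map (fun i : ℕ => (i : K2))).prod * ∏ i ∈ s.toFinset, ((s.count i).factorial : K2)

/-- Elementary symmetric function e_n = ∑_{ρ⊢n} (-1)^{n-ℓ(ρ)} p_ρ/z_ρ. -/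
noncomputable def eSym (n : ℕ) : SymF2 :=
  ∑ ρ : Nat.Partition n,
    ((-1 : K2) ^ (n - Multiset.card ρ.parts) * (zCoef ρ.parts)⁻¹) • pProd ρ.parts

/-- Plethystic evaluation: the algebra map sending p_k to A k. -/
noncomputable def plEval (A : ℕ → K2) : SymF2 →ₐ[K2] K2 := MvPolynomial.aeval A

/-- The copy of a symmetric function in the X alphabet. -/
noncomputable def embX : SymF2 →ₐ[K2] SymT :=
  MvPolynomial.aeval (fun k : ℕ => (MvPolynomial.X (k, false) : SymT))

/-- The copy of a symmetric function in the Y alphabet. -/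
noncomputable def embY : SymF2 →ₐ[K2] SymT :=
  MvPolynomial.aeval (fun k : ℕ => (MvPolynomial.X (k, true) : SymT))

/-- The parts of a partition as a weakly decreasing list. -/
def partsList {n : ℕ} (μ : n.Partition) : List ℕ := (μ.parts.sort (· ≤ ·)).reverse

def pRowLen {n : ℕ} (μ : n.Partition) (i : ℕ) : ℕ := (partsList μ).getD i 0
def pColLen {n : ℕ} (μ : n.Partition) (j : ℕ) : ℕ :=
  Multiset.card (μ.parts.filter (fun p => j < p))

/-- The cells (i,j) of the Young diagram of μ; the coarm of (i,j) is j and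
the coleg is i. -/
def pCells {n : ℕ} (μ : n.Partition) : Finset (ℕ × ℕ) :=
  (Finset.range n ×ˢ Finset.range n).filter (fun c => c.2 < pRowLen μ c.1)

def pArm {n : ℕ} (μ : n.Partition) (c : ℕ × ℕ) : ℕ := pRowLen μ c.1 - c.2 - 1
def pLeg {n : ℕ} (μ : n.Partition) (c : ℕ × ℕ) : ℕ := pColLen μ c.2 - c.1 - 1

/-- p_k[M] = (1-q^k)(1-t^k). -/
noncomputable def pM (k : ℕ) : K2 := (1 - qV ^ k) * (1 - tV ^ k)

/-- B_μ(q,t) = ∑_{c∈μ} q^{a'(c)} t^{l'(c)}. -/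
noncomputable def Bmu {n : ℕ} (μ : n.Partition) : K2 := ∑ c ∈ pCells μ, qV ^ c.2 * tV ^ c.1

/-- Π'_μ(q,t) = ∏_{c∈μ, c≠(0,0)} (1 - q^{a'(c)} t^{l'(c)}). -/
noncomputable def PiMu {n : ℕ} (μ : n.Partition) : K2 :=
  ∏ c ∈ (pCells μ).erase (0, 0), (1 - qV ^ c.2 * tV ^ c.1)

/-- w_μ(q,t) = ∏_{c∈μ}(q^{a(c)} - t^{l(c)+1})(t^{l(c)} - q^{a(c)+1}). -/
noncomputable def wMu {n : ℕ} (μ : n.Partition) : K2 :=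
  ∏ c ∈ pCells μ, ((qV ^ pArm μ c - tV ^ (pLeg μ c + 1)) * (tV ^ pLeg μ c - qV ^ (pArm μ c + 1)))

section Aux

lemma qV_pow_ne_one {k : ℕ} (hk : 1 ≤ k) : qV ^ k ≠ 1 := by
  intro h
  have hinj := IsFractionRing.injective (MvPolynomial (Fin 2) ℚ) K2
  have : (MvPolynomial.X 0 : MvPolynomial (Fin 2) ℚ) ^ k = 1 := by
    apply hinj
    simpa [qV, map_pow] using h
  have h0 := congrArg (MvPolynomial.eval (fun _ : Fin 2 => (0 : ℚ))) this
  simp [zero_pow (Nat.one_le_iff_ne_zero.mp hk)] at h0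

lemma tV_pow_ne_one {k : ℕ} (hk : 1 ≤ k) : tV ^ k ≠ 1 := by
  intro h
  have hinj := IsFractionRing.injective (MvPolynomial (Fin 2) ℚ) K2
  have : (MvPolynomial.X 1 : MvPolynomial (Fin 2) ℚ) ^ k = 1 := by
    apply hinj
    simpa [tV, map_pow] using h
  have h0 := congrArg (MvPolynomial.eval (fun _ : Fin 2 => (0 : ℚ))) this
  simp [zero_pow (Nat.one_le_iff_ne_zero.mp hk)] at h0

lemma pM_ne_zero {k : ℕ} (hk : 1 ≤ k) : pM k ≠ 0 := by
  unfold pM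
  refine mul_ne_zero ?_ ?_ <;> rw [sub_ne_zero]
  · exact fun h => qV_pow_ne_one hk h.symm
  · exact fun h => tV_pow_ne_one hk h.symm

/-- Evaluation of the two-alphabet ring: X ↦ X, Y ↦ M. -/
noncomputable def PhiM : SymT →ₐ[K2] SymF2 :=
  MvPolynomial.aeval (fun p : ℕ × Bool =>
    if p.2 then MvPolynomial.C (pM p.1) else MvPolynomial.X p.1)

lemma PhiM_embX (f : SymF2) : PhiM (embX f) = f := by
  have h : PhiM.comp embX = AlgHom.id K2 SymF2 := by
    apply MvPolynomial.algHom_ext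
    intro k
    simp [PhiM, embX]
  calc PhiM (embX f) = (PhiM.comp embX) f := rfl
    _ = f := by rw [h]; rfl

lemma PhiM_embY (f : SymF2) : PhiM (embY f) = MvPolynomial.C (plEval pM f) := by
  have h : PhiM.comp embY = (Algebra.ofId K2 SymF2).comp (plEval pM) := by
    apply MvPolynomial.algHom_ext
    intro k
    simp [PhiM, embY, plEval, Algebra.ofId_apply, MvPolynomial.algebraMap_eq]
  calc PhiM (embY f) = (PhiM.comp embY) f := rfl
    _ = (Algebra.ofId K2 SymF2) (plEval pM f) := by rw [h]; rfl
    _ = MvPolynomial.C (plEval pM f) := by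
        rw [Algebra.ofId_apply, MvPolynomial.algebraMap_eq]

set_option maxHeartbeats 1600000 in
lemma PhiM_cauchy_lhs (n : ℕ) :
    PhiM (MvPolynomial.aeval
        (fun k : ℕ => (pM k)⁻¹ • (MvPolynomial.X (k, false) * MvPolynomial.X (k, true) : SymT))
        (eSym n)) = eSym n := by
  set g : ℕ → SymT := fun k =>
    (pM k)⁻¹ • (MvPolynomial.X (k, false) * MvPolynomial.X (k, true) : SymT) with hg
  have hcomp : PhiM.comp (MvPolynomial.aeval g) =
      MvPolynomial.aeval (fun k : ℕ => (((pM k)⁻¹ * pM k) • MvPolynomial.X k : SymF2)) := by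
    apply MvPolynomial.algHom_ext
    intro k
    simp only [AlgHom.comp_apply, MvPolynomial.aeval_X, hg]
    rw [map_smul]
    simp only [PhiM, map_mul, MvPolynomial.aeval_X, Bool.false_eq_true, if_false, if_true]
    rw [MvPolynomial.smul_eq_C_mul, MvPolynomial.smul_eq_C_mul, map_mul]
    ring
  have hc := DFunLike.congr_fun hcomp (eSym n)
  simp only [AlgHom.comp_apply] at hc
  rw [hc]
  -- now evaluate on eSym n
  unfold eSym
  rw [map_sum]
  apply Finset.sum_congr rfl
  intro ρ _
  rw [map_smul]
  congr 1
  unfold pProd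
  rw [map_multiset_prod, Multiset.map_map]
  apply congrArg
  apply Multiset.map_congr rfl
  intro i hi
  have hpos : 0 < i := ρ.parts_pos hi
  simp only [Function.comp_apply, MvPolynomial.aeval_X]
  rw [inv_mul_cancel₀ (pM_ne_zero hpos), one_smul]

end Aux

/-- (Elementary symmetric function in the Macdonald basis.)  Let H̃ be a family
of symmetric functions indexed by partitions of n satisfying the Macdonald–Cauchy
formula e_n[XY/M] = ∑_{μ⊢n} H̃_μ[X] H̃_μ[Y] / w_μ and the evaluation
H̃_μ[M] = M B_μ Π'_μ.  Then for n ≥ 1,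
e_n = ∑_{μ⊢n} (1-q)(1-t) H̃_μ Π'_μ B_μ / w_μ. -/
theorem en_macdonald_expansion (n : ℕ) (hn : 1 ≤ n)
    (Ht : n.Partition → SymF2)
    (hCauchy :
      MvPolynomial.aeval
          (fun k : ℕ => (pM k)⁻¹ • (MvPolynomial.X (k, false) * MvPolynomial.X (k, true) : SymT))
          (eSym n) =
        ∑ μ : n.Partition, (wMu μ)⁻¹ • (embX (Ht μ) * embY (Ht μ)))
    (heval : ∀ μ : n.Partition,
      plEval pM (Ht μ) = (1 - qV) * (1 - tV) * Bmu μ * PiMu μ) :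
    eSym n =
      ∑ μ : n.Partition,
        (((1 - qV) * (1 - tV) * Bmu μ * PiMu μ) / wMu μ) • Ht μ := by
  have h := congrArg PhiM hCauchy
  rw [PhiM_cauchy_lhs n, map_sum] at h
  rw [h]
  apply Finset.sum_congr rfl
  intro μ _
  rw [map_smul, map_mul, PhiM_embX, PhiM_embY, heval μ]
  rw [mul_comm, ← MvPolynomial.smul_eq_C_mul, smul_smul]
  congr 1
  rw [div_eq_mul_inv, mul_comm]
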